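/- For all integers k ≥ 1 and n ≥ 1, the number of descending strictly k-Naples parking functions of length n equals ((k+1)/n)·binom(2n, n+k+1); equivalently, n times this number equals (k+1)·binom(2n, n+k+1). -/

import Mathlib

/-- The spots a car with preference `p` checks backward: `p-1, p-2, …, max(p-k,1)`. -/
def backCandidates (k p : ℕ) : List ℕ :=
  ((List.range k).map (fun i => p - (i + 1))).filter (fun s => decide (1 ≤ s))

/-- The spots a car with preference `p` checks when driving forward: `p+1, …, n`. -/
def fwdCandidates (n p : ℕ) : List ℕ :=
  List.range' (p + 1) (n - p)

/-- The spot in which a car with preference `p` parks under the `k`-Naples rule on a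
one-way street with `n` spots, given the set `occ` of already occupied spots
(`none` if the car fails to park). -/
def naplesStep (k n : ℕ) (occ : Finset ℕ) (p : ℕ) : Option ℕ :=
  if p ∈ occ then
    match (backCandidates k p).filter (fun s => decide (s ∉ occ)) with
    | s :: _ => some s
    | [] =>
      match (fwdCandidates n p).filter (fun s => decide (s ∉ occ)) with
      | s :: _ => some s
      | [] => none
  else some p

/-- Runs the `k`-Naples parking process starting from occupied set `occ` for cars with
the given list of preferences.  Returns the list of spots in which the successive cars
park, or `none` if some car fails to park. -/
def naplesSpots (k n : ℕ) : Finset ℕ → List ℕ → Option (List ℕ)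
  | _, [] => some []
  | occ, p :: rest =>
    match naplesStep k n occ p with
    | none => none
    | some s => (naplesSpots k n (insert s occ) rest).map (fun l => s :: l)

/-- All cars with the given preferences successfully park, starting from occupied set `occ`. -/
def ParksAllFrom (k n : ℕ) (occ : Finset ℕ) (prefs : List ℕ) : Prop :=
  (naplesSpots k n occ prefs).isSome

/-- A parking preference of length `n`: a list of `n` numbers in `{1, …, n}`. -/
def IsParkingPref (n : ℕ) (prefs : List ℕ) : Prop :=
  prefs.length = n ∧ ∀ p ∈ prefs, 1 ≤ p ∧ p ≤ n

/-- A `k`-Naples parking function of length `n`. -/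
def IsNaplesPF (k n : ℕ) (prefs : List ℕ) : Prop :=
  IsParkingPref n prefs ∧ ParksAllFrom k n ∅ prefs

/-- Strictly `k`-Naples: a `k`-Naples parking function that is not `(k-1)`-Naples. -/
def StrictlyNaples (k n : ℕ) (f : List ℕ) : Prop :=
  IsNaplesPF k n f ∧ ¬ IsNaplesPF (k - 1) n f

/-! ### Dynamics of the parking process -/

lemma mem_backCandidates {k p s : ℕ} :
    s ∈ backCandidates k p ↔ (∃ i < k, s = p - (i + 1)) ∧ 1 ≤ s := by
  simp [backCandidates, List.mem_filter, List.mem_map, List.mem_range]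
  aesop

lemma naplesStep_mem {k n : ℕ} {occ : Finset ℕ} {p s : ℕ}
    (h : naplesStep k n occ p = some s) (hp1 : 1 ≤ p) (hpn : p ≤ n) :
    p - k ≤ s ∧ 1 ≤ s ∧ s ≤ n ∧ s ∉ occ := by
  unfold naplesStep at h
  by_cases ho : p ∈ occ
  · rw [if_pos ho] at h
    cases hb : (backCandidates k p).filter (fun s => decide (s ∉ occ)) with
    | cons a t =>
      rw [hb] at h
      simp only [Option.some.injEq] at h
      have ha : a ∈ (backCandidates k p).filter (fun s => decide (s ∉ occ)) := by
        rw [hb]; exact List.mem_cons_self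
      rw [List.mem_filter] at ha
      obtain ⟨ha1, ha2⟩ := ha
      rw [mem_backCandidates] at ha1
      obtain ⟨⟨i, hik, hae⟩, hs1⟩ := ha1
      subst h
      refine ⟨by omega, hs1, by omega, by simpa using ha2⟩
    | nil =>
      rw [hb] at h
      cases hf : (fwdCandidates n p).filter (fun s => decide (s ∉ occ)) with
      | cons a t =>
        rw [hf] at h
        simp only [Option.some.injEq] at h
        have ha : a ∈ (fwdCandidates n p).filter (fun s => decide (s ∉ occ)) := by
          rw [hf]; exact List.mem_cons_self
        rw [List.mem_filter] at ha
        obtain ⟨ha1, ha2⟩ := ha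
        rw [fwdCandidates, List.mem_range'_1] at ha1
        subst h
        refine ⟨by omega, by omega, by omega, by simpa using ha2⟩
      | nil => rw [hf] at h; exact absurd h (by simp)
  · rw [if_neg ho] at h
    simp only [Option.some.injEq] at h
    subst h
    exact ⟨by omega, hp1, hpn, ho⟩

lemma naplesStep_some {k n : ℕ} {occ : Finset ℕ} {p : ℕ} (hp1 : 1 ≤ p) (hpn : p ≤ n)
    (hfree : ∃ s, p - k ≤ s ∧ 1 ≤ s ∧ s ≤ n ∧ s ∉ occ) :
    ∃ s, naplesStep k n occ p = some s := by
  obtain ⟨s, hs1, hs2, hs3, hs4⟩ := hfree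
  unfold naplesStep
  by_cases ho : p ∈ occ
  · rw [if_pos ho]
    cases hb : (backCandidates k p).filter (fun t => decide (t ∉ occ)) with
    | cons a t => exact ⟨a, rfl⟩
    | nil =>
      cases hf : (fwdCandidates n p).filter (fun t => decide (t ∉ occ)) with
      | cons a t => exact ⟨a, rfl⟩
      | nil =>
        exfalso
        have hsp : s ≠ p := fun hc => hs4 (hc ▸ ho)
        rcases lt_or_gt_of_ne hsp with hlt | hgt
        · have hmem : s ∈ (backCandidates k p).filter (fun t => decide (t ∉ occ)) := by
            rw [List.mem_filter, mem_backCandidates]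
            exact ⟨⟨⟨p - s - 1, by omega, by omega⟩, hs2⟩, by simpa using hs4⟩
          rw [hb] at hmem; exact absurd hmem (by simp)
        · have hmem : s ∈ (fwdCandidates n p).filter (fun t => decide (t ∉ occ)) := by
            rw [List.mem_filter, fwdCandidates, List.mem_range'_1]
            exact ⟨⟨by omega, by omega⟩, by simpa using hs4⟩
          rw [hf] at hmem; exact absurd hmem (by simp)
  · rw [if_neg ho]; exact ⟨p, rfl⟩

lemma naplesSpots_spec {k n : ℕ} : ∀ {prefs : List ℕ} {occ : Finset ℕ} {l : List ℕ},
    naplesSpots k n occ prefs = some l → (∀ p ∈ prefs, 1 ≤ p ∧ p ≤ n) →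
    List.Forall₂ (fun p s => p - k ≤ s ∧ s ≤ n) prefs l ∧ l.Nodup ∧ ∀ s ∈ l, s ∉ occ := by
  intro prefs
  induction prefs with
  | nil =>
    intro occ l h _
    simp only [naplesSpots, Option.some.injEq] at h
    subst h; simp
  | cons p rest ih =>
    intro occ l h hb
    rw [naplesSpots] at h
    cases hs : naplesStep k n occ p with
    | none => rw [hs] at h; exact absurd h (by simp)
    | some s =>
      rw [hs] at h
      rw [Option.map_eq_some_iff] at h
      obtain ⟨l', hl', rfl⟩ := h
      have hp := hb p (by simp)
      have hm := naplesStep_mem hs hp.1 hp.2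
      obtain ⟨h1, h2, h3⟩ := ih hl' (fun q hq => hb q (by simp [hq]))
      refine ⟨List.Forall₂.cons ⟨hm.1, hm.2.2.1⟩ h1, ?_, ?_⟩
      · exact List.nodup_cons.mpr
          ⟨fun hc => (h3 s hc) (Finset.mem_insert_self s occ), h2⟩
      · intro t ht
        rcases List.mem_cons.mp ht with rfl | ht
        · exact hm.2.2.2
        · exact fun hc => h3 t ht (Finset.mem_insert_of_mem hc)

lemma parks_of_bounds {k n : ℕ} : ∀ (prefs : List ℕ) (occ : Finset ℕ),
    (∀ p ∈ prefs, 1 ≤ p ∧ p ≤ n) →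
    (∀ i (h : i < prefs.length), occ.card + i + max (prefs.get ⟨i, h⟩) (k + 1) ≤ n + k) →
    ParksAllFrom k n occ prefs := by
  intro prefs
  induction prefs with
  | nil => intro occ _ _; simp [ParksAllFrom, naplesSpots]
  | cons p rest ih =>
    intro occ hb hcond
    have hp := hb p (by simp)
    have h0 := hcond 0 (by simp)
    simp only [List.get] at h0
    -- find a free spot in [max (p-k) 1, n]
    have hfree : ∃ s, p - k ≤ s ∧ 1 ≤ s ∧ s ≤ n ∧ s ∉ occ := by
      by_contra hc
      push_neg at hc
      have hsub : Finset.Icc (max (p - k) 1) n ⊆ occ := by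
        intro s hsmem
        rw [Finset.mem_Icc] at hsmem
        exact hc s (by omega) (by omega) (by omega)
      have hcard := Finset.card_le_card hsub
      rw [Nat.card_Icc] at hcard
      omega
    obtain ⟨s, hstep⟩ := naplesStep_some hp.1 hp.2 hfree
    have hm := naplesStep_mem hstep hp.1 hp.2
    have hParks : ParksAllFrom k n (insert s occ) rest := by
      apply ih _ (fun q hq => hb q (by simp [hq]))
      intro i hi
      have := hcond (i + 1) (by simpa using Nat.succ_lt_succ hi)
      rw [Finset.card_insert_of_notMem hm.2.2.2]
      simp only [List.get_cons_succ] at this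
      omega
    rw [ParksAllFrom, naplesSpots, hstep]
    rw [ParksAllFrom] at hParks
    simpa using hParks

/-- Characterization: a descending parking preference is a `k`-Naples parking function
iff `f i + i ≤ n + k` for every (0-based) index `i`. -/
lemma naples_char {k n : ℕ} {f : List ℕ} (hs : List.Pairwise (fun a b => b ≤ a) f) :
    IsNaplesPF k n f ↔
      (IsParkingPref n f ∧ ∀ i (h : i < f.length), f.get ⟨i, h⟩ + i ≤ n + k) := by
  constructor
  · rintro ⟨hpref, hparks⟩
    refine ⟨hpref, ?_⟩
    intro t ht
    by_contra hcon
    push_neg at hcon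
    rw [ParksAllFrom, Option.isSome_iff_exists] at hparks
    obtain ⟨l, hl⟩ := hparks
    obtain ⟨hfa, hnodup, -⟩ := naplesSpots_spec hl hpref.2
    rw [List.forall₂_iff_get] at hfa
    obtain ⟨hlen, hget⟩ := hfa
    have hln : l.length = n := by rw [← hlen]; exact hpref.1
    have hfn : f.length = n := hpref.1
    -- the first t+1 parked spots all lie in [n - t + 1, n]
    have hbig : ∀ x ∈ l.take (t + 1), n - t + 1 ≤ x ∧ x ≤ n := by
      intro x hx
      rw [List.mem_take_iff_getElem] at hx
      obtain ⟨j, hj, rfl⟩ := hx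
      have hj2 : j < l.length := lt_of_lt_of_le hj (min_le_right _ _)
      have hj1 : j < f.length := by omega
      have hspec := hget j hj1 hj2
      have hjt : j ≤ t := by omega
      have hmono : f.get ⟨t, ht⟩ ≤ f.get ⟨j, hj1⟩ := by
        rcases eq_or_lt_of_le hjt with heq | hlt
        · exact le_of_eq (by congr 1; exact Fin.ext heq.symm)
        · exact hs.rel_get_of_lt (by exact hlt)
      have : l.get ⟨j, hj2⟩ = l[j] := rfl
      omega
    have hnd : (l.take (t + 1)).Nodup := (List.take_sublist _ _).nodup hnodup
    have hc1 : (l.take (t + 1)).toFinset.card = t + 1 := by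
      rw [List.toFinset_card_of_nodup hnd, List.length_take]
      omega
    have hsub : (l.take (t + 1)).toFinset ⊆ Finset.Icc (n - t + 1) n := by
      intro x hx
      rw [List.mem_toFinset] at hx
      rw [Finset.mem_Icc]
      exact hbig x hx
    have := Finset.card_le_card hsub
    rw [hc1, Nat.card_Icc] at this
    omega
  · rintro ⟨hpref, hbnd⟩
    refine ⟨hpref, ?_⟩
    apply parks_of_bounds _ _ hpref.2
    intro i hi
    have h1 := hbnd i hi
    have h2 : i < n := by rw [← hpref.1]; exact hi
    rw [Finset.card_empty]
    omega

/-! ### Counting descending bounded sequences -/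

/-- The finset of descending lists of length `L` with entries in `[1, m]` such that the
`i`-th entry (1-based) is at most `B - i`. -/
def AF : ℕ → ℕ → ℕ → Finset (List ℕ)
  | 0, _, _ => {[]}
  | (L + 1), m, B =>
      (Finset.Icc 1 (min m (B - 1))).biUnion fun h => (AF L h (B - 1)).image (List.cons h)

lemma AF_card (L m B : ℕ) :
    (AF (L + 1) m B).card = ∑ h ∈ Finset.Icc 1 (min m (B - 1)), (AF L h (B - 1)).card := by
  rw [AF, Finset.card_biUnion]
  · exact Finset.sum_congr rfl fun h _ =>
      Finset.card_image_of_injective _ (fun a b hab => by injection hab)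
  · intro a _ b _ hab
    simp only [Finset.disjoint_left, Finset.mem_image]
    rintro x ⟨u, _, rfl⟩ ⟨v, _, hv⟩
    exact hab (by injection hv.symm)

lemma mem_AF : ∀ (L m B : ℕ) (f : List ℕ),
    f ∈ AF L m B ↔ f.length = L ∧ List.Pairwise (fun a b => b ≤ a) f ∧
      (∀ p ∈ f, 1 ≤ p ∧ p ≤ m) ∧ ∀ i (h : i < f.length), f.get ⟨i, h⟩ + i + 1 ≤ B := by
  intro L
  induction L with
  | zero =>
    intro m B f
    simp only [AF, Finset.mem_singleton]
    constructor
    · rintro rfl; simp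
    · rintro ⟨hl, -⟩
      exact List.length_eq_zero_iff.mp hl
  | succ L ih =>
    intro m B f
    rw [AF]
    simp only [Finset.mem_biUnion, Finset.mem_image, Finset.mem_Icc]
    constructor
    · rintro ⟨h, ⟨hh1, hh2⟩, t, ht, rfl⟩
      rw [ih] at ht
      obtain ⟨hlen, hsort, hbnd, hidx⟩ := ht
      have hB : 2 ≤ B := by omega
      refine ⟨by simp [hlen], ?_, ?_, ?_⟩
      · rw [List.pairwise_cons]
        exact ⟨fun b hb => (hbnd b hb).2, hsort⟩
      · intro p hp
        rcases List.mem_cons.mp hp with rfl | hp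
        · exact ⟨hh1, by omega⟩
        · have := hbnd p hp; omega
      · intro i hi
        match i with
        | 0 => simp only [List.get]; omega
        | (j + 1) =>
          have hj : j < t.length := by simpa using hi
          have := hidx j hj
          simp only [List.get_cons_succ]
          omega
    · rintro ⟨hlen, hsort, hbnd, hidx⟩
      match f with
      | [] => simp at hlen
      | h :: t =>
        have h0 := hidx 0 (by simp)
        simp only [List.get] at h0
        have hh := hbnd h (by simp)
        rw [List.pairwise_cons] at hsort
        refine ⟨h, ⟨hh.1, by omega⟩, t, ?_, rfl⟩
        rw [ih]
        refine ⟨by simpa using hlen, hsort.2, ?_, ?_⟩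
        · intro p hp
          exact ⟨(hbnd p (by simp [hp])).1, hsort.1 p hp⟩
        · intro i hi
          have := hidx (i + 1) (by simpa using Nat.succ_lt_succ hi)
          simp only [List.get_cons_succ] at this
          omega

lemma AF_count : ∀ L : ℕ, ∀ m B : ℕ, m + 1 ≤ B → L + 1 ≤ B →
    (AF L (m + 1) B).card + (L + m).choose B = (L + m).choose m := by
  intro L
  induction L with
  | zero =>
    intro m B h1 h2
    have : (AF 0 (m + 1) B).card = 1 := by simp [AF]
    rw [this, Nat.zero_add, Nat.choose_eq_zero_of_lt (by omega), Nat.choose_self]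
  | succ L ih =>
    intro m B
    induction m with
    | zero =>
      intro h1 h2
      rw [AF_card]
      have hmin : min 1 (B - 1) = 1 := by omega
      rw [hmin]
      have hIcc : Finset.Icc 1 1 = {1} := Finset.Icc_self 1
      rw [hIcc, Finset.sum_singleton]
      have h : (AF L 1 (B - 1)).card + L.choose (B - 1) = L.choose 0 := by
        simpa using ih 0 (B - 1) (by omega) (by omega)
      have hz : L.choose (B - 1) = 0 := Nat.choose_eq_zero_of_lt (by omega)
      have hz2 : (L + 1 + 0).choose B = 0 := Nat.choose_eq_zero_of_lt (by omega)
      have hz3 : L.choose 0 = 1 := Nat.choose_zero_right _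
      have hz4 : (L + 1 + 0).choose 0 = 1 := Nat.choose_zero_right _
      omega
    | succ m ihm =>
      intro h1 h2
      have hA := ihm (by omega) h2
      by_cases hc : m + 3 ≤ B
      · have hsplit : (AF (L + 1) (m + 2) B).card
            = (AF (L + 1) (m + 1) B).card + (AF L (m + 2) (B - 1)).card := by
          rw [AF_card, AF_card]
          have e1 : min (m + 2) (B - 1) = m + 1 + 1 := by omega
          have e2 : min (m + 1) (B - 1) = m + 1 := by omega
          rw [e1, e2, Finset.sum_Icc_succ_top (by omega : 1 ≤ m + 1 + 1)]
        have hB := ih (m + 1) (B - 1) (by omega) (by omega)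
        -- hB : (AF L (m+2) (B-1)).card + (L + (m+1)).choose (B-1) = (L + (m+1)).choose (m+1)
        obtain ⟨B', rfl⟩ : ∃ B', B = B' + 1 := ⟨B - 1, by omega⟩
        simp only [Nat.add_sub_cancel] at hB hsplit
        have p1 : (L + 1 + (m + 1)).choose (B' + 1)
            = (L + (m + 1)).choose B' + (L + (m + 1)).choose (B' + 1) := by
          have e : L + 1 + (m + 1) = (L + (m + 1)) + 1 := by omega
          rw [e, Nat.choose_succ_succ]
        have p2 : (L + 1 + (m + 1)).choose (m + 1)
            = (L + (m + 1)).choose m + (L + (m + 1)).choose (m + 1) := by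
          have e : L + 1 + (m + 1) = (L + (m + 1)) + 1 := by omega
          rw [e, Nat.choose_succ_succ]
        have e3 : L + 1 + m = L + (m + 1) := by omega
        rw [e3] at hA
        have hB2 : (AF L (m + 2) B').card + (L + (m + 1)).choose B'
            = (L + (m + 1)).choose (m + 1) := hB
        rw [hsplit, p1, p2]
        omega
      · -- m + 2 = B
        have hBe : B = m + 2 := by omega
        have heq : (AF (L + 1) (m + 2) B).card = (AF (L + 1) (m + 1) B).card := by
          rw [AF_card, AF_card]
          have e1 : min (m + 2) (B - 1) = m + 1 := by omega
          have e2 : min (m + 1) (B - 1) = m + 1 := by omega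
          rw [e1, e2]
        subst hBe
        have e3 : L + 1 + m = L + (m + 1) := by omega
        rw [e3] at hA
        have p1 : (L + 1 + (m + 1)).choose (m + 2)
            = (L + (m + 1)).choose (m + 1) + (L + (m + 1)).choose (m + 2) := by
          have e : L + 1 + (m + 1) = (L + (m + 1)) + 1 := by omega
          rw [e, Nat.choose_succ_succ]
        have p2 : (L + 1 + (m + 1)).choose (m + 1)
            = (L + (m + 1)).choose m + (L + (m + 1)).choose (m + 1) := by
          have e : L + 1 + (m + 1) = (L + (m + 1)) + 1 := by omega
          rw [e, Nat.choose_succ_succ]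
        rw [heq, p1, p2]
        omega

/-- For all `k ≥ 1` and `n ≥ 1`, the number of descending strictly
`k`-Naples parking functions of length `n` equals `((k+1)/n)·binom(2n, n+k+1)`;
equivalently, `n` times this number equals `(k+1)·binom(2n, n+k+1)`. -/
theorem statement15 (k n : ℕ) (hk : 1 ≤ k) (hn : 1 ≤ n) :
    n * Set.ncard {f : List ℕ | StrictlyNaples k n f ∧ List.Pairwise (fun a b => b ≤ a) f} =
      (k + 1) * (2 * n).choose (n + k + 1) := by
  obtain ⟨m, rfl⟩ : ∃ m, n = m + 1 := ⟨n - 1, by omega⟩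
  have hset : {f : List ℕ | StrictlyNaples k (m + 1) f ∧ List.Pairwise (fun a b => b ≤ a) f}
      = ↑(AF (m + 1) (m + 1) (m + 1 + k + 1) \ AF (m + 1) (m + 1) (m + 1 + k)) := by
    ext f
    simp only [Set.mem_setOf_eq, Finset.coe_sdiff, Set.mem_diff, Finset.mem_coe]
    constructor
    · rintro ⟨⟨hN, hnotN⟩, hsort⟩
      rw [naples_char hsort] at hN
      obtain ⟨hpref, hbnd⟩ := hN
      refine ⟨?_, ?_⟩
      · rw [mem_AF]
        exact ⟨hpref.1, hsort, fun p hp => hpref.2 p hp,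
          fun i h => by have := hbnd i h; omega⟩
      · intro hmem
        rw [mem_AF] at hmem
        apply hnotN
        rw [naples_char hsort]
        refine ⟨hpref, fun i h => ?_⟩
        have := hmem.2.2.2 i h
        omega
    · rintro ⟨hmem, hnot⟩
      rw [mem_AF] at hmem
      obtain ⟨hlen, hsort, hbnd, hidx⟩ := hmem
      have hpref : IsParkingPref (m + 1) f := ⟨hlen, hbnd⟩
      refine ⟨⟨?_, ?_⟩, hsort⟩
      · rw [naples_char hsort]
        exact ⟨hpref, fun i h => by have := hidx i h; omega⟩
      · intro hcon
        rw [naples_char hsort] at hcon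
        apply hnot
        rw [mem_AF]
        refine ⟨hlen, hsort, hbnd, fun i h => ?_⟩
        have := hcon.2 i h
        omega
  rw [hset, Set.ncard_coe_finset]
  have hsub : AF (m + 1) (m + 1) (m + 1 + k) ⊆ AF (m + 1) (m + 1) (m + 1 + k + 1) := by
    intro f hf
    rw [mem_AF] at hf ⊢
    exact ⟨hf.1, hf.2.1, hf.2.2.1, fun i h => by have := hf.2.2.2 i h; omega⟩
  rw [Finset.card_sdiff_of_subset hsub]
  have h1 := AF_count (m + 1) m (m + 1 + k + 1) (by omega) (by omega)
  have h2 := AF_count (m + 1) m (m + 1 + k) (by omega) (by omega)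
  set a := (AF (m + 1) (m + 1) (m + 1 + k + 1)).card with ha
  set b := (AF (m + 1) (m + 1) (m + 1 + k)).card with hb
  set A := (m + 1 + m).choose (m + 1 + k) with hA
  set Bc := (m + 1 + m).choose (m + 1 + k + 1) with hBc
  have hrat : Bc * (m + 1 + k + 1) = A * (m - k) := by
    have h := Nat.choose_succ_right_eq (m + 1 + m) (m + 1 + k)
    have e : m + 1 + m - (m + 1 + k) = m - k := by omega
    rw [e] at h
    exact h
  have hABle : Bc ≤ A := by
    by_cases hmk : k ≤ m
    · refine Nat.le_of_mul_le_mul_right ?_ (show 0 < m + 1 + k + 1 by omega)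
      calc Bc * (m + 1 + k + 1) = A * (m - k) := hrat
        _ ≤ A * (m + 1 + k + 1) := Nat.mul_le_mul_left A (by omega)
    · have hA0 : A = 0 := Nat.choose_eq_zero_of_lt (by omega)
      have hB0 : Bc = 0 := Nat.choose_eq_zero_of_lt (by omega)
      omega
  have hPas : (2 * (m + 1)).choose (m + 1 + k + 1) = A + Bc := by
    rw [show 2 * (m + 1) = (m + 1 + m) + 1 from by ring]
    rw [hA, hBc]
    exact Nat.choose_succ_succ _ _
  have hab : a - b = A - Bc := by omega
  rw [hPas, hab]
  by_cases hmk : k ≤ m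
  · have key : (m + 1) * A = (k + 1) * (A + Bc) + (m + 1) * Bc := by
      have h4 : m - k + (k + 1) = m + 1 := by omega
      calc (m + 1) * A = (m - k) * A + (k + 1) * A := by rw [← add_mul, h4]
        _ = Bc * (m + 1 + k + 1) + (k + 1) * A := by rw [mul_comm (m - k) A, ← hrat]
        _ = (k + 1) * (A + Bc) + (m + 1) * Bc := by ring
    have hble : (m + 1) * Bc ≤ (m + 1) * A := Nat.mul_le_mul_left _ hABle
    rw [Nat.mul_sub]
    omega
  · have hA0 : A = 0 := Nat.choose_eq_zero_of_lt (by omega)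
    have hB0 : Bc = 0 := Nat.choose_eq_zero_of_lt (by omega)
    rw [hA0, hB0]
    simp
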